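/- For every q with 0 < q < 1, every integer n ≥ 2 and every x ∈ [0,1]: L_{n,q}(t³,x) = (q^n/[n]_q²) · x(1 − v(q,x)) · [ 2 − q^n + [n−1]_q (1+q) v(q²,x) + [n]_q q v(q²,x) ], where t³ denotes the function t ↦ t³ on [0,1]. -/

import Mathlib

open Finset Filter

noncomputable section

/-- The q-integer `[n]_q = 1 + q + ⋯ + q^(n-1)`. -/
def qInt (q : ℝ) (n : ℕ) : ℝ := ∑ i ∈ Finset.range n, q ^ i

/-- The q-factorial `[n]_q!`. -/
def qFact (q : ℝ) : ℕ → ℝ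
  | 0 => 1
  | n + 1 => qFact q n * qInt q (n + 1)

/-- The q-binomial coefficient `[n k]_q`. -/
def qBinom (q : ℝ) (n k : ℕ) : ℝ := qFact q n / (qFact q k * qFact q (n - k))

/-- The Lupaş basis function `b_{nk}(q;x)`. -/
def lupasB (q : ℝ) (n k : ℕ) (x : ℝ) : ℝ :=
  qBinom q n k * q ^ (k * (k - 1) / 2) * x ^ k * (1 - x) ^ (n - k) /
    ∏ j ∈ Finset.range (n - 1), (1 - x + q ^ (j + 1) * x)

/-- The limit Lupaş basis function `b_{∞k}(q;x)` (for `0 < q < 1`, `x ∈ [0,1)`). -/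
def lupasBInf (q : ℝ) (k : ℕ) (x : ℝ) : ℝ :=
  q ^ (k * (k - 1) / 2) * (x / (1 - x)) ^ k /
    ((1 - q) ^ k * qFact q k * ∏' j : ℕ, (1 + q ^ j * (x / (1 - x))))

/-- The Lupaş q-analogue of the Bernstein operator `R_{n,q}(f,x)`. -/
def lupasR (q : ℝ) (n : ℕ) (f : ℝ → ℝ) (x : ℝ) : ℝ :=
  ∑ k ∈ Finset.range (n + 1), f (qInt q k / qInt q n) * lupasB q n k x

/-- The limit q-Lupaş operator `R_{∞,q}(f,x)` for `0 < q < 1`. -/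
def lupasRInfLow (q : ℝ) (f : ℝ → ℝ) (x : ℝ) : ℝ :=
  if x = 1 then f 1 else ∑' k : ℕ, f (1 - q ^ k) * lupasBInf q k x

/-- The limit q-Lupaş operator `R_{∞,q}(f,x)`: for `q > 1` it is defined by
reflection, `R_{∞,q}(f,x) = R_{∞,1/q}(g,1-x)` with `g(x) = f(1-x)`. -/
def lupasRInf (q : ℝ) (f : ℝ → ℝ) (x : ℝ) : ℝ :=
  if 1 < q then lupasRInfLow (1 / q) (fun t => f (1 - t)) (1 - x)
  else lupasRInfLow q f x

/-- The transform `v(q,x) = qx/(1-x+qx)`. -/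
def vq (q x : ℝ) : ℝ := q * x / (1 - x + q * x)

/-- `L_{n,q}(f,x) = R_{n,q}(f,x) - R_{∞,q}(f,x)`. -/
def lupasL (q : ℝ) (n : ℕ) (f : ℝ → ℝ) (x : ℝ) : ℝ :=
  lupasR q n f x - lupasRInf q f x

/-- The modulus of continuity `ω(f,t)` of `f` on `[0,1]`. -/
def omega1 (f : ℝ → ℝ) (t : ℝ) : ℝ :=
  sSup {d | ∃ x ∈ Set.Icc (0:ℝ) 1, ∃ y ∈ Set.Icc (0:ℝ) 1, |x - y| ≤ t ∧ d = |f x - f y|}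

/-- The second modulus of smoothness `ω₂(f,t)` of `f` on `[0,1]`. -/
def omega2 (f : ℝ → ℝ) (t : ℝ) : ℝ :=
  sSup {d | ∃ h, 0 ≤ h ∧ h ≤ t ∧ ∃ x, 0 ≤ x ∧ x ≤ 1 - 2 * h ∧
    d = |f (x + 2 * h) - 2 * f (x + h) + f x|}
open Topology


section basic
variable {q : ℝ}

lemma tri (k : ℕ) : (k+1)*k/2 = k*(k-1)/2 + k := by
  have h1 : (k+1)*k/2 = (k+1).choose 2 := by rw [Nat.choose_two_right]; simp
  have h2 : k*(k-1)/2 = k.choose 2 := (Nat.choose_two_right k).symm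
  rw [h1, h2, Nat.choose_succ_succ, Nat.choose_one_right, Nat.add_comm]

lemma qInt_eq (hq : q ≠ 1) (n : ℕ) : qInt q n = (1 - q^n)/(1-q) := by
  rw [qInt, geom_sum_eq hq]
  have h1 : q - 1 ≠ 0 := sub_ne_zero.mpr hq
  have h2 : (1:ℝ) - q ≠ 0 := sub_ne_zero.mpr (Ne.symm hq)
  field_simp
  ring

lemma qInt_pos (hq0 : 0 < q) {n : ℕ} (hn : 1 ≤ n) : 0 < qInt q n := by
  apply Finset.sum_pos (fun i _ => pow_pos hq0 i)
  exact ⟨0, Finset.mem_range.mpr hn⟩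

lemma qInt_one_le (hq0 : 0 < q) {n : ℕ} (hn : 1 ≤ n) : 1 ≤ qInt q n := by
  have := Finset.single_le_sum (f := fun i => q ^ i) (fun i _ => (pow_pos hq0 i).le)
    (Finset.mem_range.mpr hn)
  simpa [qInt] using this

lemma qFact_pos (hq0 : 0 < q) (n : ℕ) : 0 < qFact q n := by
  induction n with
  | zero => norm_num [qFact]
  | succ n ih => exact mul_pos ih (qInt_pos hq0 (Nat.le_add_left 1 n))

lemma qInt_add (hq : q ≠ 1) (a b : ℕ) : qInt q (a+b) = qInt q a + q^a * qInt q b := by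
  have h2 : (1:ℝ) - q ≠ 0 := sub_ne_zero.mpr (Ne.symm hq)
  rw [qInt_eq hq, qInt_eq hq, qInt_eq hq, pow_add]
  field_simp
  ring

lemma qBinom_zero (hq0 : 0 < q) (n : ℕ) : qBinom q n 0 = 1 := by
  rw [qBinom]
  simp [qFact, (qFact_pos hq0 n).ne']

lemma qBinom_self (hq0 : 0 < q) (n : ℕ) : qBinom q n n = 1 := by
  rw [qBinom]
  simp [qFact, (qFact_pos hq0 n).ne']

lemma qPascal (hq0 : 0 < q) (hq : q ≠ 1) (k a : ℕ) :
    q^k * qBinom q (k+1+a+1) (k+1)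
      = q^k * qBinom q (k+1+a) (k+1) + q^(k+1+a) * qBinom q (k+1+a) k := by
  have hFk := (qFact_pos hq0 k).ne'
  have hFa := (qFact_pos hq0 a).ne'
  have hFka := (qFact_pos hq0 (k+1+a)).ne'
  have hIk := (qInt_pos hq0 (Nat.le_add_left 1 k)).ne'
  have hIa := (qInt_pos hq0 (Nat.le_add_left 1 a)).ne'
  have hsub1 : (k+1+a+1) - (k+1) = a+1 := by omega
  have hsub2 : (k+1+a) - (k+1) = a := by omega
  have hsub3 : (k+1+a) - k = a+1 := by omega
  have e1 : qFact q (k+1+a+1) = qFact q (k+1+a) * qInt q (k+1+a+1) := rfl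
  have e2 : qFact q (a+1) = qFact q a * qInt q (a+1) := rfl
  have e3 : qFact q (k+1) = qFact q k * qInt q (k+1) := rfl
  have hqadd : qInt q (k+1+a+1) = qInt q (a+1) + q^(a+1) * qInt q (k+1) := by
    rw [← qInt_add hq]
    congr 1
    omega
  have hpow : q^(k+1+a) = q^k * q^(a+1) := by
    rw [← pow_add]
    congr 1
    omega
  rw [qBinom, qBinom, qBinom, hsub1, hsub2, hsub3, e1, e2, e3, hqadd, hpow]
  field_simp

end basic

section thmsec
variable {q : ℝ}

lemma qbinom_thm (hq0 : 0 < q) (hq : q ≠ 1) (n : ℕ) (u : ℝ) :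
    ∏ j ∈ Finset.range n, (1 + q^j * u)
      = ∑ k ∈ Finset.range (n+1), qBinom q n k * q^(k*(k-1)/2) * u^k := by
  induction n generalizing u with
  | zero => simp [qBinom_zero hq0]
  | succ n ih =>
    rw [Finset.prod_range_succ, ih]
    have key : ∀ k ∈ Finset.range n,
        qBinom q (n+1) (k+1) * q^((k+1)*((k+1)-1)/2) * u^(k+1)
          = qBinom q n (k+1) * q^((k+1)*((k+1)-1)/2) * u^(k+1)
            + q^n * (qBinom q n k * q^(k*(k-1)/2) * u^(k+1)) := by
      intro k hk
      have hk' : k + 1 ≤ n := Finset.mem_range.mp hk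
      obtain ⟨a, rfl⟩ : ∃ a, n = k+1+a := ⟨n - (k+1), by omega⟩
      have hp := qPascal hq0 hq k a
      have ht : (k+1)*((k+1)-1)/2 = k*(k-1)/2 + k := by
        simpa using tri k
      rw [ht, pow_add]
      linear_combination (q^(k*(k-1)/2) * u^(k+1)) * hp
    have hS1 : (∑ k ∈ Finset.range (n+1), qBinom q n k * q^(k*(k-1)/2) * u^k)
        = (∑ k ∈ Finset.range n, qBinom q n (k+1) * q^((k+1)*((k+1)-1)/2) * u^(k+1)) + 1 := by
      rw [Finset.sum_range_succ']
      simp [qBinom_zero hq0]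
    have hS2 : (∑ k ∈ Finset.range (n+1), qBinom q n k * q^(k*(k-1)/2) * u^k) * (q^n * u)
        = (∑ k ∈ Finset.range n, q^n * (qBinom q n k * q^(k*(k-1)/2) * u^(k+1)))
          + q^n * (qBinom q n n * q^(n*(n-1)/2) * u^(n+1)) := by
      rw [Finset.sum_mul, Finset.sum_range_succ]
      congr 1
      · exact Finset.sum_congr rfl (fun k _ => by ring)
      · ring
    have hR : ∑ k ∈ Finset.range (n+1+1), qBinom q (n+1) k * q^(k*(k-1)/2) * u^k
        = ((∑ k ∈ Finset.range n, (qBinom q n (k+1) * q^((k+1)*((k+1)-1)/2) * u^(k+1)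
              + q^n * (qBinom q n k * q^(k*(k-1)/2) * u^(k+1)))) + 1)
          + q^n * (qBinom q n n * q^(n*(n-1)/2) * u^(n+1)) := by
      rw [Finset.sum_range_succ, Finset.sum_range_succ']
      congr 1
      · congr 1
        · exact Finset.sum_congr rfl key
        · simp [qBinom_zero hq0]
      · rw [qBinom_self hq0 (n+1), qBinom_self hq0 n]
        have htn : (n+1)*((n+1)-1)/2 = n*(n-1)/2 + n := by simpa using tri n
        rw [htn, pow_add]
        ring
    rw [hR, Finset.sum_add_distrib, mul_add, mul_one, hS2]
    nth_rewrite 1 [hS1]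
    ring

lemma qFact_add (a k : ℕ) : qFact q (a+k) = qFact q a * ∏ i ∈ Finset.range k, qInt q (a+i+1) := by
  induction k with
  | zero => simp
  | succ k ih =>
    have e1 : qFact q (a+(k+1)) = qFact q (a+k) * qInt q (a+k+1) := rfl
    rw [e1, ih, Finset.prod_range_succ, mul_assoc]

lemma qBinom_prod (hq0 : 0 < q) (hq : q ≠ 1) {n k : ℕ} (hkn : k ≤ n) :
    qBinom q n k = (∏ i ∈ Finset.range k, (1 - q^(n-k+i+1))) / ((1-q)^k * qFact q k) := by
  obtain ⟨a, rfl⟩ : ∃ a, n = a + k := ⟨n - k, by omega⟩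
  have hFa := (qFact_pos hq0 a).ne'
  have hFk := (qFact_pos hq0 k).ne'
  have h1q : (1:ℝ) - q ≠ 0 := sub_ne_zero.mpr (Ne.symm hq)
  simp only [Nat.add_sub_cancel]
  rw [qBinom, Nat.add_sub_cancel, qFact_add a k]
  rw [Finset.prod_congr rfl (fun i _ => qInt_eq hq (a+i+1)), Finset.prod_div_distrib,
    Finset.prod_const, Finset.card_range]
  field_simp

lemma qBinom_le (hq0 : 0 < q) (hq1 : q < 1) {n k : ℕ} (hkn : k ≤ n) :
    qBinom q n k ≤ 1 / ((1-q)^k * qFact q k) := by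
  rw [qBinom_prod hq0 hq1.ne hkn]
  have hD : (0:ℝ) < (1-q)^k * qFact q k :=
    mul_pos (pow_pos (by linarith) k) (qFact_pos hq0 k)
  have hN : ∏ i ∈ Finset.range k, (1 - q^(n-k+i+1)) ≤ 1 :=
    Finset.prod_le_one
      (fun i _ => by have := pow_le_one₀ hq0.le hq1.le (n := n-k+i+1); linarith)
      (fun i _ => by have := pow_pos hq0 (n-k+i+1); linarith)
  gcongr

lemma qBinom_nonneg (hq0 : 0 < q) (hq1 : q < 1) {n k : ℕ} (hkn : k ≤ n) :
    0 ≤ qBinom q n k := by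
  rw [qBinom_prod hq0 hq1.ne hkn]
  apply div_nonneg
  · exact Finset.prod_nonneg fun i _ => by
      have : q^(n-k+i+1) ≤ 1 := pow_le_one₀ hq0.le hq1.le
      linarith
  · exact (mul_pos (pow_pos (by linarith) k) (qFact_pos hq0 k)).le

lemma qBinom_tendsto (hq0 : 0 < q) (hq1 : q < 1) (k : ℕ) :
    Tendsto (fun n => qBinom q n k) atTop (𝓝 (1 / ((1-q)^k * qFact q k))) := by
  have hqn : Tendsto (fun m : ℕ => q^m) atTop (𝓝 0) :=
    tendsto_pow_atTop_nhds_zero_of_lt_one hq0.le hq1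
  have h2 : ∀ i : ℕ, Tendsto (fun n : ℕ => 1 - q^(n-k+i+1)) atTop (𝓝 1) := by
    intro i
    have hinner : Tendsto (fun n : ℕ => n-k+i+1) atTop atTop := by
      have : (fun n : ℕ => n-k+i+1) = (fun m => m + (i+1)) ∘ (fun n => n - k) := by
        funext n; simp; omega
      rw [this]
      exact (tendsto_add_atTop_nat (i+1)).comp (tendsto_sub_atTop_nat k)
    have := hqn.comp hinner
    simpa using tendsto_const_nhds.sub this
  have h1 : Tendsto (fun n : ℕ => ∏ i ∈ Finset.range k, (1 - q^(n-k+i+1))) atTop (𝓝 1) := by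
    have := tendsto_finset_prod (Finset.range k)
      (f := fun i n => 1 - q^(n-k+i+1)) (a := fun _ => 1) (fun i _ => h2 i)
    simpa using this
  have h3 : (fun n : ℕ => (∏ i ∈ Finset.range k, (1 - q^(n-k+i+1))) / ((1-q)^k * qFact q k))
      =ᶠ[atTop] (fun n => qBinom q n k) :=
    Filter.eventually_atTop.mpr ⟨k, fun n hn => (qBinom_prod hq0 hq1.ne hn).symm⟩
  exact (h1.div_const _).congr' h3

end thmsec

/-- The terms of the q-exponential-type series. -/
def bq (q u : ℝ) (k : ℕ) : ℝ := q^(k*(k-1)/2) * u^k / ((1-q)^k * qFact q k)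

section bqsec
variable {q u : ℝ}

lemma bq_zero : bq q u 0 = 1 := by simp [bq, qFact]

lemma bq_succ (hq0 : 0 < q) (hq1 : q < 1) (k : ℕ) :
    bq q u (k+1) = bq q u k * (q^k * u / ((1-q) * qInt q (k+1))) := by
  have h1q : (1:ℝ) - q ≠ 0 := by linarith
  have hI := (qInt_pos hq0 (Nat.le_add_left 1 k)).ne'
  have hF := (qFact_pos hq0 k).ne'
  have ht : (k+1)*((k+1)-1)/2 = k*(k-1)/2 + k := by simpa using tri k
  have e1 : qFact q (k+1) = qFact q k * qInt q (k+1) := rfl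
  rw [bq, bq, ht, pow_add, pow_succ, pow_succ, e1]
  field_simp

lemma bq_nonneg (hq0 : 0 < q) (hq1 : q < 1) (hu : 0 ≤ u) (k : ℕ) : 0 ≤ bq q u k :=
  div_nonneg (mul_nonneg (pow_nonneg hq0.le _) (pow_nonneg hu _))
    (mul_nonneg (pow_nonneg (by linarith) _) (qFact_pos hq0 _).le)

lemma bq_mul (k : ℕ) : bq q (q*u) k = q^k * bq q u k := by
  simp only [bq, mul_pow]
  ring

lemma bq_summable (hq0 : 0 < q) (hq1 : q < 1) (hu : 0 ≤ u) : Summable (bq q u) := by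
  apply summable_of_ratio_norm_eventually_le (r := 1/2) (by norm_num)
  have h1q : (0:ℝ) < 1 - q := by linarith
  have hqn : Tendsto (fun k : ℕ => q^k * u / (1-q)) atTop (𝓝 0) := by
    have := (tendsto_pow_atTop_nhds_zero_of_lt_one hq0.le hq1).mul_const u
    simpa using this.div_const (1-q)
  have hev : ∀ᶠ k in atTop, q^k * u / (1-q) ≤ 1/2 :=
    hqn.eventually_le_const (show (0:ℝ) < 1/2 by norm_num)
  filter_upwards [hev] with k hk
  have hI1 : 1 ≤ qInt q (k+1) := qInt_one_le hq0 (Nat.le_add_left 1 k)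
  have hIpos : 0 < qInt q (k+1) := by linarith
  have hfac : 0 ≤ q^k * u / ((1-q) * qInt q (k+1)) := by positivity
  have hfac2 : q^k * u / ((1-q) * qInt q (k+1)) ≤ 1/2 := by
    have e1 : q^k * u / ((1-q) * qInt q (k+1)) = (q^k * u / (1-q)) / qInt q (k+1) := by
      rw [div_div]
    have e2 : (q^k * u / (1-q)) / qInt q (k+1) ≤ q^k * u / (1-q) :=
      div_le_self (div_nonneg (mul_nonneg (pow_nonneg hq0.le k) hu) h1q.le) hI1
    rw [e1]
    exact e2.trans hk
  rw [bq_succ hq0 hq1, norm_mul]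
  rw [Real.norm_of_nonneg hfac]
  calc ‖bq q u k‖ * (q^k * u / ((1-q) * qInt q (k+1))) ≤ ‖bq q u k‖ * (1/2) := by
        gcongr
    _ = 1/2 * ‖bq q u k‖ := by ring

lemma bq_fe (hq0 : 0 < q) (hq1 : q < 1) (hu : 0 ≤ u) :
    ∑' k, bq q u k = (1+u) * ∑' k, bq q (q*u) k := by
  have h1q : (1:ℝ) - q ≠ 0 := by linarith
  have hs := bq_summable hq0 hq1 hu
  have hs' := bq_summable hq0 hq1 (mul_nonneg hq0.le hu)
  have key : ∀ k, bq q u k - bq q (q*u) k = (1 - q^k) * bq q u k := fun k => by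
    rw [bq_mul]; ring
  have hsub : Summable (fun k => (1-q^k) * bq q u k) := by
    have : (fun k => (1-q^k) * bq q u k) = fun k => bq q u k - bq q (q*u) k :=
      funext fun k => (key k).symm
    rw [this]
    exact hs.sub hs'
  have step : ∑' k, (1 - q^k) * bq q u k = u * ∑' k, bq q (q*u) k := by
    rw [Summable.tsum_eq_zero_add hsub]
    simp only [pow_zero, sub_self, zero_mul, zero_add]
    have h1 : ∀ k : ℕ, (1 - q^(k+1)) * bq q u (k+1) = u * bq q (q*u) k := by
      intro k
      have hI := (qInt_pos hq0 (Nat.le_add_left 1 k)).ne'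
      have hIeq : (1 - q^(k+1)) = (1-q) * qInt q (k+1) := by
        rw [qInt_eq hq1.ne]
        field_simp
      rw [bq_mul, bq_succ hq0 hq1, hIeq]
      field_simp
    rw [tsum_congr h1, tsum_mul_left]
  have main : ∑' k, bq q u k - ∑' k, bq q (q*u) k = u * ∑' k, bq q (q*u) k := by
    rw [← Summable.tsum_sub hs hs', tsum_congr key, step]
  linarith [main]

lemma bq_tsum_ge_one (hq0 : 0 < q) (hq1 : q < 1) (hu : 0 ≤ u) :
    1 ≤ ∑' k, bq q u k := by
  have := Summable.le_tsum (bq_summable hq0 hq1 hu) 0 (fun j _ => bq_nonneg hq0 hq1 hu j)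
  rwa [bq_zero] at this

lemma euler_prod (hq0 : 0 < q) (hq1 : q < 1) (hu : 0 ≤ u) :
    ∏' j : ℕ, (1 + q^j * u) = ∑' k, bq q u k := by
  have h1q : (0:ℝ) < 1 - q := by linarith
  set f : ℕ → ℝ := fun j => 1 + q^j*u with hf
  have hf1 : ∀ j, 1 ≤ f j := fun j => le_add_of_nonneg_right (mul_nonneg (pow_nonneg hq0.le j) hu)
  have hfpos : ∀ j, 0 < f j := fun j => lt_of_lt_of_le one_pos (hf1 j)
  have hprod_one_le : ∀ s : Finset ℕ, (1:ℝ) ≤ ∏ j ∈ s, f j := by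
    intro s
    calc (1:ℝ) = ∏ j ∈ s, 1 := (Finset.prod_const_one).symm
      _ ≤ ∏ j ∈ s, f j := Finset.prod_le_prod (by norm_num) (fun j _ => hf1 j)
  have hbdd : BddAbove (Set.range fun s : Finset ℕ => ∏ j ∈ s, f j) := by
    use Real.exp (u / (1-q))
    rintro y ⟨s, rfl⟩
    calc ∏ j ∈ s, f j ≤ ∏ j ∈ s, Real.exp (q^j * u) :=
          Finset.prod_le_prod (fun j _ => (hfpos j).le)
            (fun j _ => by
              have := Real.add_one_le_exp (q^j*u)
              show 1 + q^j * u ≤ Real.exp (q^j * u)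
              linarith)
      _ = Real.exp (∑ j ∈ s, q^j*u) := (Real.exp_sum s _).symm
      _ ≤ Real.exp (u/(1-q)) := by
          apply Real.exp_le_exp.mpr
          have h1 : ∑ j ∈ s, q^j*u = (∑ j ∈ s, q^j) * u := by rw [Finset.sum_mul]
          have h2 : ∑ j ∈ s, q^j ≤ ∑' j : ℕ, q^j :=
            Summable.sum_le_tsum s (fun i _ => (pow_pos hq0 i).le) (summable_geometric_of_lt_one hq0.le hq1)
          rw [tsum_geometric_of_lt_one hq0.le hq1] at h2
          rw [h1, div_eq_mul_inv, mul_comm u (1-q)⁻¹]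
          exact mul_le_mul_of_nonneg_right h2 hu
  have hmono : Monotone (fun s : Finset ℕ => ∏ j ∈ s, f j) := by
    intro s t hst
    have := Finset.prod_sdiff (f := f) hst
    calc ∏ j ∈ s, f j = 1 * ∏ j ∈ s, f j := (one_mul _).symm
      _ ≤ (∏ j ∈ t \ s, f j) * ∏ j ∈ s, f j := by
          apply mul_le_mul_of_nonneg_right (hprod_one_le _)
          exact (Finset.prod_pos (fun j _ => hfpos j)).le
      _ = ∏ j ∈ t, f j := this
  set P := sSup (Set.range fun s : Finset ℕ => ∏ j ∈ s, f j) with hP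
  have hlub : IsLUB (Set.range fun s : Finset ℕ => ∏ j ∈ s, f j) P :=
    isLUB_csSup ⟨1, ⟨∅, by simp⟩⟩ hbdd
  have hprod : HasProd f P := tendsto_atTop_isLUB hmono hlub
  have hseq : Tendsto (fun n => ∏ j ∈ Finset.range n, f j) atTop (𝓝 P) :=
    hprod.tendsto_prod_nat
  -- second limit, via Tannery's theorem
  have hseq2 : Tendsto (fun n => ∏ j ∈ Finset.range n, f j) atTop (𝓝 (∑' k, bq q u k)) := by
    have hab : ∀ k : ℕ, Tendsto
        (fun n : ℕ => if k ≤ n then qBinom q n k * q^(k*(k-1)/2) * u^k else 0)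
        atTop (𝓝 (bq q u k)) := by
      intro k
      have h1 := (qBinom_tendsto hq0 hq1 k).mul_const (q^(k*(k-1)/2) * u^k)
      have h2 : (fun n => qBinom q n k * (q^(k*(k-1)/2) * u^k)) =ᶠ[atTop]
          (fun n : ℕ => if k ≤ n then qBinom q n k * q^(k*(k-1)/2) * u^k else 0) :=
        Filter.eventually_atTop.mpr ⟨k, fun n hn => by beta_reduce; rw [if_pos hn]; ring⟩
      have h3 : 1 / ((1-q)^k * qFact q k) * (q^(k*(k-1)/2) * u^k) = bq q u k := by
        rw [bq]; ring
      rw [← h3]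
      exact h1.congr' h2
    have hbound : ∀ᶠ n : ℕ in atTop, ∀ k : ℕ,
        ‖if k ≤ n then qBinom q n k * q^(k*(k-1)/2) * u^k else 0‖ ≤ bq q u k := by
      apply Filter.Eventually.of_forall
      intro n k
      by_cases hkn : k ≤ n
      · rw [if_pos hkn]
        have hnn : 0 ≤ qBinom q n k * q^(k*(k-1)/2) * u^k :=
          mul_nonneg (mul_nonneg (qBinom_nonneg hq0 hq1 hkn) (pow_nonneg hq0.le _))
            (pow_nonneg hu _)
        rw [Real.norm_of_nonneg hnn]
        calc qBinom q n k * q^(k*(k-1)/2) * u^k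
            ≤ (1 / ((1-q)^k * qFact q k)) * q^(k*(k-1)/2) * u^k := by
              apply mul_le_mul_of_nonneg_right ?_ (pow_nonneg hu _)
              exact mul_le_mul_of_nonneg_right (qBinom_le hq0 hq1 hkn) (pow_nonneg hq0.le _)
          _ = bq q u k := by rw [bq]; ring
      · rw [if_neg hkn]
        simpa using bq_nonneg hq0 hq1 hu k
    have key := tendsto_tsum_of_dominated_convergence (𝓕 := atTop)
      (f := fun (n k : ℕ) => if k ≤ n then qBinom q n k * q^(k*(k-1)/2) * u^k else 0)
      (g := bq q u) (bound := bq q u) (bq_summable hq0 hq1 hu) hab hbound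
    apply key.congr
    intro n
    rw [tsum_eq_sum (s := Finset.range (n+1))
      (fun k hk => if_neg (by simp only [Finset.mem_range] at hk; omega))]
    rw [qbinom_thm hq0 hq1.ne n u]
    exact Finset.sum_congr rfl fun k hk =>
      if_pos (by simp only [Finset.mem_range] at hk; omega)
  rw [hprod.tprod_eq]
  exact tendsto_nhds_unique hseq hseq2

end bqsec

set_option maxHeartbeats 1600000 in
theorem lupasL_third_moment (q : ℝ) (hq0 : 0 < q) (hq1 : q < 1) (n : ℕ) (hn : 2 ≤ n)
    (x : ℝ) (hx : x ∈ Set.Icc (0:ℝ) 1) :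
    lupasL q n (fun t => t ^ 3) x =
      q ^ n / (qInt q n) ^ 2 * (x * (1 - vq q x)) *
        (2 - q ^ n + qInt q (n - 1) * (1 + q) * vq (q ^ 2) x +
          qInt q n * q * vq (q ^ 2) x) := by
  obtain ⟨hx0, hx1le⟩ := hx
  have h1q : (0:ℝ) < 1 - q := by linarith
  have hnotq : ¬ (1 < q) := by linarith
  obtain ⟨m, rfl⟩ : ∃ m, n = m + 2 := ⟨n - 2, by omega⟩
  have hqm1 : q^(m+2) < 1 := pow_lt_one₀ hq0.le hq1 (by omega)
  have hQne : (1:ℝ) - q^(m+2) ≠ 0 := by linarith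
  rcases eq_or_lt_of_le hx1le with hx1 | hx1
  · -- case x = 1
    subst hx1
    have hRinf1 : lupasRInf q (fun s => s^3) 1 = 1 := by
      rw [lupasRInf, if_neg hnotq, lupasRInfLow, if_pos rfl]
      norm_num
    have hBnn : lupasB q (m+2) (m+2) 1 = 1 := by
      rw [lupasB, qBinom_self hq0]
      have hden : (∏ j ∈ Finset.range (m+2-1), ((1:ℝ) - 1 + q^(j+1) * 1))
          = q^((m+2)*((m+2)-1)/2) := by
        rw [show m+2-1 = m+1 from rfl]
        rw [Finset.prod_congr rfl (fun j _ => by ring :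
          ∀ j ∈ Finset.range (m+1), ((1:ℝ) - 1 + q^(j+1) * 1) = q^(j+1))]
        rw [Finset.prod_pow_eq_pow_sum]
        congr 1
        have e1 : ∑ j ∈ Finset.range (m+1), (j+1) = ∑ j ∈ Finset.range (m+2), j := by
          rw [Finset.sum_range_succ' (fun j => j) (m+1)]
          simp
        rw [e1]
        exact Finset.sum_range_id (m+2)
      rw [hden]
      have : ((1:ℝ)-1)^(m+2-(m+2)) = 1 := by norm_num
      rw [this]
      have hqe : (q:ℝ)^((m+2)*((m+2)-1)/2) ≠ 0 := pow_ne_zero _ hq0.ne'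
      field_simp
      exact one_pow _
    have hR1 : lupasR q (m+2) (fun s => s^3) 1 = 1 := by
      rw [lupasR, Finset.sum_range_succ]
      have hzero : ∀ k ∈ Finset.range (m+2),
          (fun s => s^3) (qInt q k / qInt q (m+2)) * lupasB q (m+2) k 1 = 0 := by
        intro k hk
        have hk' := Finset.mem_range.mp hk
        have hb : lupasB q (m+2) k 1 = 0 := by
          rw [lupasB]
          have : ((1:ℝ) - 1)^(m+2-k) = 0 := by
            rw [sub_self]
            exact zero_pow (by omega)
          rw [this]
          simp
        rw [hb, mul_zero]
      rw [Finset.sum_eq_zero hzero, zero_add, hBnn]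
      have hq2 := (qInt_pos hq0 (show 1 ≤ m+2 by omega)).ne'
      simp [div_self hq2]
    rw [lupasL, hR1, hRinf1]
    have hv1 : vq q 1 = 1 := by
      rw [vq]
      norm_num [hq0.ne']
    rw [hv1]
    ring
  · -- case x < 1
    have h1x : (0:ℝ) < 1 - x := by linarith
    set t := x / (1-x) with ht
    have ht0 : 0 ≤ t := div_nonneg hx0 h1x.le
    have hqt0 : 0 ≤ q*t := mul_nonneg hq0.le ht0
    have hq2t0 : 0 ≤ q*(q*t) := mul_nonneg hq0.le hqt0
    have hq3t0 : 0 ≤ q*(q*(q*t)) := mul_nonneg hq0.le hq2t0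
    have hxt : t * (1-x) = x := div_mul_cancel₀ x h1x.ne'
    have hA : (0:ℝ) < 1 + t := by linarith
    have hB : (0:ℝ) < 1 + q*t := by nlinarith
    have hC : (0:ℝ) < 1 + q*(q*t) := by nlinarith
    have hPpos : ∀ u : ℝ, 0 ≤ u → (0:ℝ) < ∏ j ∈ Finset.range (m+2), (1 + q^j * u) :=
      fun u hu => Finset.prod_pos fun j _ => by
        have : 0 ≤ q^j*u := mul_nonneg (pow_nonneg hq0.le j) hu
        linarith
    -- basis functions in terms of t
    have hBk : ∀ k, k ≤ m+2 → lupasB q (m+2) k x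
        = qBinom q (m+2) k * q^(k*(k-1)/2) * t^k
          / ∏ j ∈ Finset.range (m+2), (1 + q^j * t) := by
      intro k hk
      have hD1 : (0:ℝ) < ∏ j ∈ Finset.range (m+1), (1 + q^(j+1) * t) :=
        Finset.prod_pos fun j _ => by
          have : 0 ≤ q^(j+1)*t := mul_nonneg (pow_nonneg hq0.le _) ht0
          linarith
      have e0 : x ^ k = t^k * (1-x)^k := by rw [← mul_pow, hxt]
      have eden : ∏ j ∈ Finset.range (m+1), (1 - x + q^(j+1) * x)
          = (1-x)^(m+1) * ∏ j ∈ Finset.range (m+1), (1 + q^(j+1) * t) := by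
        calc ∏ j ∈ Finset.range (m+1), (1 - x + q^(j+1) * x)
            = ∏ j ∈ Finset.range (m+1), ((1-x) * (1 + q^(j+1) * t)) :=
              Finset.prod_congr rfl fun j _ => by rw [ht]; field_simp
          _ = _ := by rw [Finset.prod_mul_distrib, Finset.prod_const, Finset.card_range]
      have hPsplit : ∏ j ∈ Finset.range (m+2), (1 + q^j * t)
          = (∏ j ∈ Finset.range (m+1), (1 + q^(j+1) * t)) * (1+t) := by
        have e2 := Finset.prod_range_succ' (fun j => 1 + q^j*t) (m+1)
        simp only [pow_zero, one_mul] at e2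
        exact e2
      have hxA : (1-x)*(1+t) = 1 := by rw [ht]; field_simp; ring
      have hcomb : (1-x)^k * (1-x)^(m+2-k) = (1-x)^(m+1) * (1-x) := by
        rw [← pow_add, ← pow_succ]
        congr 1
        omega
      rw [lupasB, show m+2-1 = m+1 from rfl, e0, eden, hPsplit]
      rw [div_eq_div_iff (by positivity) (by positivity)]
      linear_combination
        (qBinom q (m+2) k * q^(k*(k-1)/2) * t^k
          * (∏ j ∈ Finset.range (m+1), (1 + q^(j+1) * t)) * (1+t)) * hcomb
        + (qBinom q (m+2) k * q^(k*(k-1)/2) * t^k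
          * (∏ j ∈ Finset.range (m+1), (1 + q^(j+1) * t)) * (1-x)^(m+1)) * hxA
    -- node values
    have hnode : ∀ k : ℕ, qInt q k / qInt q (m+2) = (1-q^k)/(1-q^(m+2)) := by
      intro k
      rw [qInt_eq hq1.ne, qInt_eq hq1.ne]
      rw [div_div_div_comm]
      rw [div_self (by linarith : (1:ℝ)-q ≠ 0), div_one]
    -- finite operator
    have hRn : lupasR q (m+2) (fun s => s^3) x
        = (∑ k ∈ Finset.range (m+2+1),
            ((1-q^k)/(1-q^(m+2)))^3 * (qBinom q (m+2) k * q^(k*(k-1)/2) * t^k))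
          / ∏ j ∈ Finset.range (m+2), (1 + q^j * t) := by
      rw [lupasR, Finset.sum_div]
      apply Finset.sum_congr rfl
      intro k hk
      have hk' : k ≤ m+2 := by
        have := Finset.mem_range.mp hk; omega
      rw [hBk k hk', hnode k]
      ring
    have hexpand : ∀ k ∈ Finset.range (m+2+1),
        ((1-q^k)/(1-q^(m+2)))^3 * (qBinom q (m+2) k * q^(k*(k-1)/2) * t^k)
        = (qBinom q (m+2) k * q^(k*(k-1)/2) * t^k
           - 3*(qBinom q (m+2) k * q^(k*(k-1)/2) * (q*t)^k)
           + 3*(qBinom q (m+2) k * q^(k*(k-1)/2) * (q*(q*t))^k)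
           - qBinom q (m+2) k * q^(k*(k-1)/2) * (q*(q*(q*t)))^k) / (1-q^(m+2))^3 := by
      intro k _
      rw [mul_pow q (q*t) k, mul_pow q (q*(q*t)) k, mul_pow q (q*t) k, mul_pow q t k,
        div_pow]
      field_simp
      ring
    have hsum : ∑ k ∈ Finset.range (m+2+1),
          ((1-q^k)/(1-q^(m+2)))^3 * (qBinom q (m+2) k * q^(k*(k-1)/2) * t^k)
        = ((∏ j ∈ Finset.range (m+2), (1 + q^j * t))
           - 3 * ∏ j ∈ Finset.range (m+2), (1+q^j*(q*t))
           + 3 * ∏ j ∈ Finset.range (m+2), (1+q^j*(q*(q*t)))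
           - ∏ j ∈ Finset.range (m+2), (1+q^j*(q*(q*(q*t))))) / (1-q^(m+2))^3 := by
      rw [Finset.sum_congr rfl hexpand, ← Finset.sum_div]
      congr 1
      rw [Finset.sum_sub_distrib, Finset.sum_add_distrib, Finset.sum_sub_distrib,
        ← Finset.mul_sum, ← Finset.mul_sum]
      rw [qbinom_thm hq0 hq1.ne (m+2) t, qbinom_thm hq0 hq1.ne (m+2) (q*t),
        qbinom_thm hq0 hq1.ne (m+2) (q*(q*t)), qbinom_thm hq0 hq1.ne (m+2) (q*(q*(q*t)))]
    -- infinite operator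
    have hBinf : ∀ k, lupasBInf q k x = bq q t k / ∑' k', bq q t k' := by
      intro k
      rw [lupasBInf, ← ht, euler_prod hq0 hq1 ht0, bq, ← div_div]
    have s0 := bq_summable hq0 hq1 ht0
    have s1 := bq_summable hq0 hq1 hqt0
    have s2 := bq_summable hq0 hq1 hq2t0
    have s3 := bq_summable hq0 hq1 hq3t0
    have hRinf : lupasRInf q (fun s => s^3) x
        = ((∑' k, bq q t k) - 3 * (∑' k, bq q (q*t) k) + 3 * (∑' k, bq q (q*(q*t)) k)
            - ∑' k, bq q (q*(q*(q*t))) k) / ∑' k, bq q t k := by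
      rw [lupasRInf, if_neg hnotq, lupasRInfLow, if_neg hx1.ne]
      have e1 : ∀ k : ℕ, (fun s => s^3) (1 - q^k) * lupasBInf q k x
          = ((bq q t k - 3*(bq q (q*t) k) + 3*(bq q (q*(q*t)) k) - bq q (q*(q*(q*t))) k))
            / ∑' k', bq q t k' := by
        intro k
        rw [hBinf k]
        simp only [bq_mul]
        ring
      rw [tsum_congr e1, tsum_div_const]
      congr 1
      rw [Summable.tsum_sub ((s0.sub (s1.mul_left 3)).add (s2.mul_left 3)) s3,
        Summable.tsum_add (s0.sub (s1.mul_left 3)) (s2.mul_left 3),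
        Summable.tsum_sub s0 (s1.mul_left 3), tsum_mul_left, tsum_mul_left]
    -- functional equations
    have hFE0 : (∑' k, bq q t k) = (1+t) * ∑' k, bq q (q*t) k := bq_fe hq0 hq1 ht0
    have hFE1 : (∑' k, bq q (q*t) k) = (1+q*t) * ∑' k, bq q (q*(q*t)) k := bq_fe hq0 hq1 hqt0
    have hFE2 : (∑' k, bq q (q*(q*t)) k) = (1+q*(q*t)) * ∑' k, bq q (q*(q*(q*t))) k :=
      bq_fe hq0 hq1 hq2t0
    have hE3 : 1 ≤ ∑' k, bq q (q*(q*(q*t))) k := bq_tsum_ge_one hq0 hq1 hq3t0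
    have hE3pos : (0:ℝ) < ∑' k, bq q (q*(q*(q*t))) k := by linarith
    -- product shift relations
    have hshift : ∀ u : ℝ, (∏ j ∈ Finset.range (m+2), (1 + q^j * (q*u))) * (1+u)
        = (∏ j ∈ Finset.range (m+2), (1 + q^j * u)) * (1 + q^(m+2)*u) := by
      intro u
      have e1 : ∀ j ∈ Finset.range (m+2), 1 + q^j*(q*u) = 1 + q^(j+1)*u :=
        fun j _ => by rw [pow_succ]; ring
      rw [Finset.prod_congr rfl e1]
      have e2 := Finset.prod_range_succ' (fun j => 1 + q^j*u) (m+2)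
      simp only [pow_zero, one_mul] at e2
      have e3 := Finset.prod_range_succ (fun j => 1 + q^j*u) (m+2)
      rw [← e2, e3]
    have hPt := hPpos t ht0
    have hP1e : ∏ j ∈ Finset.range (m+2), (1 + q^j * (q*t))
        = (∏ j ∈ Finset.range (m+2), (1 + q^j * t)) * (1 + q^(m+2)*t) / (1+t) :=
      eq_div_of_mul_eq hA.ne' (hshift t)
    have hP2e : ∏ j ∈ Finset.range (m+2), (1 + q^j * (q*(q*t)))
        = (∏ j ∈ Finset.range (m+2), (1 + q^j * (q*t))) * (1 + q^(m+2)*(q*t)) / (1+q*t) :=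
      eq_div_of_mul_eq hB.ne' (hshift (q*t))
    have hP3e : ∏ j ∈ Finset.range (m+2), (1 + q^j * (q*(q*(q*t))))
        = (∏ j ∈ Finset.range (m+2), (1 + q^j * (q*(q*t)))) * (1 + q^(m+2)*(q*(q*t)))
          / (1+q*(q*t)) :=
      eq_div_of_mul_eq hC.ne' (hshift (q*(q*t)))
    -- final assembly
    rw [lupasL, hRn, hsum, hRinf, div_div, hP3e, hP2e, hP1e, hFE0, hFE1, hFE2]
    rw [vq, vq, qInt_eq hq1.ne, qInt_eq hq1.ne, show m+2-1 = m+1 from rfl]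
    have hqpow : q^(m+2) = q^(m+1)*q := by
      rw [show m+2 = (m+1)+1 by omega, pow_succ]
    rw [hqpow]
    have hQne' : (1:ℝ) - q^(m+1)*q ≠ 0 := by rw [← hqpow]; exact hQne
    have hB2 : (0:ℝ) < 1 + q^2*t := by
      have : 0 ≤ q^2*t := mul_nonneg (pow_nonneg hq0.le 2) ht0
      linarith
    have hx_eq : x = t/(1+t) := by
      rw [eq_div_iff hA.ne']
      linear_combination -hxt
    rw [hx_eq]
    have hv1 : 1 - t/(1+t) + q*(t/(1+t)) = (1+q*t)/(1+t) := by
      rw [eq_div_iff hA.ne']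
      field_simp
      ring
    have hv2 : 1 - t/(1+t) + q^2*(t/(1+t)) = (1+q^2*t)/(1+t) := by
      rw [eq_div_iff hA.ne']
      field_simp
      ring
    rw [hv1, hv2]
    generalize (∑' k, bq q (q*(q*(q*t))) k) = E at hE3pos ⊢
    generalize (∏ j ∈ Finset.range (m+2), (1 + q^j * t)) = P at hPt ⊢
    field_simp [hA.ne', hB.ne', hC.ne', hB2.ne', hPt.ne', hE3pos.ne', hQne']
    ring
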